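/- The spectrogram is an operator convolution of two rank-one operators: for f, g ∈ L²(ℝ^d), ((f ⊗ f) ⋆ (ǧ ⊗ ǧ))(z) = |V_g f(z)|² for all z ∈ ℝ^{2d}, where ǧ(t) = g(−t). -/

import Mathlib

noncomputable section
open MeasureTheory ContinuousLinearMap
local notation "⟪" x ", " y "⟫ℝ" => @inner ℝ _ _ x y
local notation "⟪" x ", " y "⟫ℂ" => @inner ℂ _ _ x y
abbrev Hd (d : ℕ) := EuclideanSpace ℝ (Fin d)
abbrev Ph (d : ℕ) := Hd d × Hd d
abbrev L2 (d : ℕ) := Lp ℂ 2 (volume : Measure (Hd d))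
def IsTFShift {d : ℕ} (ρ : Ph d → (L2 d →L[ℂ] L2 d)) : Prop :=
  ∀ z (g : L2 d), (ρ z g : Hd d → ℂ) =ᵐ[volume]
    fun t => Complex.exp (2 * Real.pi * Complex.I * (⟪t, z.2⟫ℝ : ℂ)) * g (t - z.1)
def IsParity {d : ℕ} (P : L2 d →L[ℂ] L2 d) : Prop :=
  ∀ g : L2 d, (P g : Hd d → ℂ) =ᵐ[volume] fun t => g (-t)
def traceAlong {d : ℕ} {ι : Type} (e : HilbertBasis ι ℂ (L2 d)) (S : L2 d →L[ℂ] L2 d) : ℂ :=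
  ∑' i, ⟪e i, S (e i)⟫ℂ
def opAbs {d : ℕ} (S : L2 d →L[ℂ] L2 d) : L2 d →L[ℂ] L2 d := @CFC.sqrt _ _ _ _ _ _ _ _ _ IsSelfAdjoint.instNonUnitalContinuousFunctionalCalculus _
    (adjoint S ∘L S)
def IsTraceClassAlong {d : ℕ} {ι : Type} (e : HilbertBasis ι ℂ (L2 d)) (S : L2 d →L[ℂ] L2 d) : Prop :=
  Summable fun i => ‖⟪e i, opAbs S (e i)⟫ℂ‖
def traceNormAlong {d : ℕ} {ι : Type} (e : HilbertBasis ι ℂ (L2 d)) (S : L2 d →L[ℂ] L2 d) : ℝ :=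
  ∑' i, ‖⟪e i, opAbs S (e i)⟫ℂ‖
def rankOne {d : ℕ} (f g : L2 d) : L2 d →L[ℂ] L2 d := (innerSL ℂ g).smulRight f
def opTrans {d : ℕ} (ρ : Ph d → (L2 d →L[ℂ] L2 d)) (z : Ph d) (S : L2 d →L[ℂ] L2 d) :
    L2 d →L[ℂ] L2 d :=
  ρ z ∘L S ∘L adjoint (ρ z)
def fourierWigner {d : ℕ} {ι : Type} (e : HilbertBasis ι ℂ (L2 d))
    (ρ : Ph d → (L2 d →L[ℂ] L2 d)) (S : L2 d →L[ℂ] L2 d) (z : Ph d) : ℂ :=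
  Complex.exp (-(Real.pi : ℂ) * Complex.I * (⟪z.1, z.2⟫ℝ : ℂ)) * traceAlong e (ρ (-z) ∘L S)
def sympForm {d : ℕ} (z w : Ph d) : ℝ := ⟪w.1, z.2⟫ℝ - ⟪z.1, w.2⟫ℝ
def sympFourier {d : ℕ} (f : Ph d → ℂ) (z : Ph d) : ℂ :=
  ∫ w, f w * Complex.exp (-2 * Real.pi * Complex.I * (sympForm z w : ℂ))
def opConv {d : ℕ} {ι : Type} (e : HilbertBasis ι ℂ (L2 d))
    (ρ : Ph d → (L2 d →L[ℂ] L2 d)) (P : L2 d →L[ℂ] L2 d)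
    (S T : L2 d →L[ℂ] L2 d) (z : Ph d) : ℂ :=
  traceAlong e (S ∘L opTrans ρ z (P ∘L T ∘L P))
def funOpConv {d : ℕ} (ρ : Ph d → (L2 d →L[ℂ] L2 d)) (f : Ph d → ℂ)
    (S : L2 d →L[ℂ] L2 d) : L2 d →L[ℂ] L2 d :=
  ∫ z, f z • opTrans ρ z S
def STFT {d : ℕ} (ρ : Ph d → (L2 d →L[ℂ] L2 d)) (g f : L2 d) (z : Ph d) : ℂ :=
  ⟪ρ z g, f⟫ℂ

/-- Parity is involutive on `L2`. -/
lemma parity_invol {d : ℕ} {P : L2 d →L[ℂ] L2 d} (hP : IsParity P) (g : L2 d) :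
    P (P g) = g := by
  apply Lp.ext
  refine (hP (P g)).trans ?_
  have h2 := (Measure.measurePreserving_neg
    (volume : Measure (Hd d))).quasiMeasurePreserving.ae_eq (hP g)
  filter_upwards [h2] with t ht
  simpa [Function.comp] using ht

/-- Parity preserves inner products. -/
lemma parity_inner {d : ℕ} {P : L2 d →L[ℂ] L2 d} (hP : IsParity P) (a b : L2 d) :
    ⟪P a, P b⟫ℂ = ⟪a, b⟫ℂ := by
  rw [MeasureTheory.L2.inner_def, MeasureTheory.L2.inner_def]
  have h : (fun t => ⟪(P a : Hd d → ℂ) t, (P b : Hd d → ℂ) t⟫ℂ)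
      =ᵐ[volume] fun t => ⟪a (-t), b (-t)⟫ℂ := by
    filter_upwards [hP a, hP b] with t ha hb
    rw [ha, hb]
  rw [integral_congr_ae h]
  exact integral_neg_eq_self (fun t => ⟪(a : Hd d → ℂ) t, (b : Hd d → ℂ) t⟫ℂ) volume

/-- The spectrogram is an operator convolution of two rank-one operators:
`((f ⊗ f) ⋆ (ǧ ⊗ ǧ))(z) = |V_g f(z)|²`. -/
theorem spectrogram_as_opConv {d : ℕ} {ι : Type} (e : HilbertBasis ι ℂ (L2 d))
    (ρ : Ph d → (L2 d →L[ℂ] L2 d)) (hρ : IsTFShift ρ)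
    (P : L2 d →L[ℂ] L2 d) (hP : IsParity P)
    (f g : L2 d) :
    ∀ z : Ph d, opConv e ρ P (rankOne f f) (rankOne (P g) (P g)) z =
      ((‖STFT ρ g f z‖ ^ 2 : ℝ) : ℂ) := by
  intro z
  set u := ρ z g with hu
  have hPP : P ∘L rankOne (P g) (P g) ∘L P = rankOne g g := by
    refine ContinuousLinearMap.ext fun h => ?_
    show P ((rankOne (P g) (P g)) (P h)) = (rankOne g g) h
    simp only [rankOne, smulRight_apply, innerSL_apply_apply, ContinuousLinearMap.map_smul]
    rw [parity_invol hP, parity_inner hP]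
  have hOT : opTrans ρ z (rankOne g g) = rankOne u u := by
    refine ContinuousLinearMap.ext fun h => ?_
    show ρ z ((rankOne g g) ((adjoint (ρ z)) h)) = (rankOne u u) h
    simp only [rankOne, smulRight_apply, innerSL_apply_apply, ContinuousLinearMap.map_smul,
      adjoint_inner_right]
    rfl
  have hterm : ∀ i, ⟪e i, (rankOne f f ∘L rankOne u u) (e i)⟫ℂ
      = ⟪f, u⟫ℂ * (⟪u, e i⟫ℂ * ⟪e i, f⟫ℂ) := by
    intro i
    simp only [comp_apply, rankOne, smulRight_apply, innerSL_apply_apply, inner_smul_right]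
    ring
  rw [opConv, hPP, hOT, traceAlong]
  simp only [hterm]
  rw [tsum_mul_left, HilbertBasis.tsum_inner_mul_inner]
  rw [STFT, ← hu, ← inner_conj_symm f u, mul_comm, Complex.mul_conj']
  norm_cast
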